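/- Let {S(t)} be an i.i.d. source with marginal pmf p_S on a finite alphabet 𝒮, let p_{Y1,Y2|X} be a discrete memoryless broadcast channel with finite alphabets, let Ŝ_1, Ŝ_2 be finite reconstruction alphabets, let w_i : 𝒮×Ŝ_i → [0,∞) be distortion measures and d_1, d_2, κ ≥ 0. Then (κ,d_1,d_2) is achievable for System Π under distortion measures w_1 and w_2 if and only if (κ, 𝒬(w_1,d_1), 𝒬(w_2,d_2)) ∈ Γ, where 𝒬(w_i,d_i) is the set of joint pmfs q on 𝒮×Ŝ_i with 𝒮-marginal p_S satisfying Σ_{s,ŝ} q(s,ŝ) w_i(s,ŝ) ≤ d_i. -/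

import Mathlib

open scoped BigOperators Classical
open Finset

noncomputable section

/-- `p` is a probability mass function on the finite type `α`. -/
def IsPMF {α : Type} [Fintype α] (p : α → ℝ) : Prop :=
  (∀ a, 0 ≤ p a) ∧ ∑ a, p a = 1

/-- Shannon entropy (base 2) of a pmf on a finite type. -/
def Hent {α : Type} [Fintype α] (p : α → ℝ) : ℝ :=
  -∑ a, p a * Real.logb 2 (p a)

/-- Mutual information `I(A;B)` of a joint pmf on `α × β` (base-2 logarithms). -/
def MI {α β : Type} [Fintype α] [Fintype β] (p : α × β → ℝ) : ℝ :=
  Hent (fun a => ∑ b, p (a, b)) + Hent (fun b => ∑ a, p (a, b)) - Hent p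

/-- Conditional mutual information `I(A;B|C)` of a joint pmf on `α × β × γ`. -/
def CMI {α β γ : Type} [Fintype α] [Fintype β] [Fintype γ] (p : α × β × γ → ℝ) : ℝ :=
  Hent (fun ac : α × γ => ∑ b, p (ac.1, b, ac.2))
    + Hent (fun bc : β × γ => ∑ a, p (a, bc.1, bc.2))
    - Hent p
    - Hent (fun c : γ => ∑ a, ∑ b, p (a, b, c))

/-- A channel: every input letter gives a pmf on outputs. -/
def IsChannel {X Z : Type} [Fintype Z] (W : X → Z → ℝ) : Prop :=
  ∀ x, IsPMF (W x)

/-- Marginal channel to receiver 1 of a broadcast channel. -/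
def margW1 {X Y1 Y2 : Type} [Fintype Y2] (W : X → Y1 × Y2 → ℝ) : X → Y1 → ℝ :=
  fun x y1 => ∑ y2, W x (y1, y2)

/-- Marginal channel to receiver 2 of a broadcast channel. -/
def margW2 {X Y1 Y2 : Type} [Fintype Y1] (W : X → Y1 × Y2 → ℝ) : X → Y2 → ℝ :=
  fun x y2 => ∑ y1, W x (y1, y2)

/-- Memoryless `n`-fold extension of a broadcast channel. -/
def nFold {X Y1 Y2 : Type} (W : X → Y1 × Y2 → ℝ) (n : ℕ)
    (x : Fin n → X) (y : (Fin n → Y1) × (Fin n → Y2)) : ℝ :=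
  ∏ t, W (x t) (y.1 t, y.2 t)

section Channel

variable {X Y1 Y2 : Type} [Fintype Y1] [Fintype Y2]

/-- Average error probability; message `M2` known at receiver 1. -/
def errP1 (W : X → Y1 × Y2 → ℝ) (n k1 k2 : ℕ) (f : Fin k1 × Fin k2 → Fin n → X)
    (g1 : (Fin n → Y1) × Fin k2 → Fin k1) (g2 : (Fin n → Y2) → Fin k2) : ℝ :=
  (1 : ℝ) / ((k1 : ℝ) * (k2 : ℝ)) *
    ∑ m : Fin k1 × Fin k2, ∑ y : (Fin n → Y1) × (Fin n → Y2),
      nFold W n (f m) y * (if g1 (y.1, m.2) = m.1 ∧ g2 y.2 = m.2 then 0 else 1)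

/-- Average error probability; message `M1` known at receiver 2. -/
def errP2 (W : X → Y1 × Y2 → ℝ) (n k1 k2 : ℕ) (f : Fin k1 × Fin k2 → Fin n → X)
    (g1 : (Fin n → Y1) → Fin k1) (g2 : (Fin n → Y2) × Fin k1 → Fin k2) : ℝ :=
  (1 : ℝ) / ((k1 : ℝ) * (k2 : ℝ)) *
    ∑ m : Fin k1 × Fin k2, ∑ y : (Fin n → Y1) × (Fin n → Y2),
      nFold W n (f m) y * (if g1 y.1 = m.1 ∧ g2 (y.2, m.1) = m.2 then 0 else 1)

/-- Average error probability; no receiver side information. -/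
def errP0 (W : X → Y1 × Y2 → ℝ) (n k1 k2 : ℕ) (f : Fin k1 × Fin k2 → Fin n → X)
    (g1 : (Fin n → Y1) → Fin k1) (g2 : (Fin n → Y2) → Fin k2) : ℝ :=
  (1 : ℝ) / ((k1 : ℝ) * (k2 : ℝ)) *
    ∑ m : Fin k1 × Fin k2, ∑ y : (Fin n → Y1) × (Fin n → Y2),
      nFold W n (f m) y * (if g1 y.1 = m.1 ∧ g2 y.2 = m.2 then 0 else 1)

/-- Achievability of a rate pair with `M2` available at receiver 1. -/
def Ach1 (W : X → Y1 × Y2 → ℝ) (R : ℝ × ℝ) : Prop :=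
  0 ≤ R.1 ∧ 0 ≤ R.2 ∧ ∀ ε : ℝ, 0 < ε →
    ∃ (n k1 k2 : ℕ), 0 < n ∧ 0 < k1 ∧ 0 < k2 ∧
      ∃ (f : Fin k1 × Fin k2 → Fin n → X) (g1 : (Fin n → Y1) × Fin k2 → Fin k1)
        (g2 : (Fin n → Y2) → Fin k2),
        R.1 ≤ Real.logb 2 (k1 : ℝ) / (n : ℝ) ∧ R.2 ≤ Real.logb 2 (k2 : ℝ) / (n : ℝ) ∧
        errP1 W n k1 k2 f g1 g2 ≤ ε

/-- Achievability of a rate pair with `M1` available at receiver 2. -/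
def Ach2 (W : X → Y1 × Y2 → ℝ) (R : ℝ × ℝ) : Prop :=
  0 ≤ R.1 ∧ 0 ≤ R.2 ∧ ∀ ε : ℝ, 0 < ε →
    ∃ (n k1 k2 : ℕ), 0 < n ∧ 0 < k1 ∧ 0 < k2 ∧
      ∃ (f : Fin k1 × Fin k2 → Fin n → X) (g1 : (Fin n → Y1) → Fin k1)
        (g2 : (Fin n → Y2) × Fin k1 → Fin k2),
        R.1 ≤ Real.logb 2 (k1 : ℝ) / (n : ℝ) ∧ R.2 ≤ Real.logb 2 (k2 : ℝ) / (n : ℝ) ∧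
        errP2 W n k1 k2 f g1 g2 ≤ ε

/-- Achievability of a rate pair with no receiver side information. -/
def Ach0 (W : X → Y1 × Y2 → ℝ) (R : ℝ × ℝ) : Prop :=
  0 ≤ R.1 ∧ 0 ≤ R.2 ∧ ∀ ε : ℝ, 0 < ε →
    ∃ (n k1 k2 : ℕ), 0 < n ∧ 0 < k1 ∧ 0 < k2 ∧
      ∃ (f : Fin k1 × Fin k2 → Fin n → X) (g1 : (Fin n → Y1) → Fin k1)
        (g2 : (Fin n → Y2) → Fin k2),
        R.1 ≤ Real.logb 2 (k1 : ℝ) / (n : ℝ) ∧ R.2 ≤ Real.logb 2 (k2 : ℝ) / (n : ℝ) ∧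
        errP0 W n k1 k2 f g1 g2 ≤ ε

/-- Capacity region `𝒞₁`: side information `M2` at receiver 1. -/
def Cap1 (W : X → Y1 × Y2 → ℝ) : Set (ℝ × ℝ) := closure {R | Ach1 W R}

/-- Capacity region `𝒞₂`: side information `M1` at receiver 2. -/
def Cap2 (W : X → Y1 × Y2 → ℝ) : Set (ℝ × ℝ) := closure {R | Ach2 W R}

/-- Private-message capacity region `𝒞`. -/
def Cap (W : X → Y1 × Y2 → ℝ) : Set (ℝ × ℝ) := closure {R | Ach0 W R}

end Channel

/-- `κ·𝒜` for a set of rate pairs. -/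
def scaleSet (κ : ℝ) (A : Set (ℝ × ℝ)) : Set (ℝ × ℝ) :=
  (fun R : ℝ × ℝ => (κ * R.1, κ * R.2)) '' A

/-- Binary entropy function (base 2). -/
def Hb (x : ℝ) : ℝ := -(x * Real.logb 2 x) - (1 - x) * Real.logb 2 (1 - x)

/-- Binary convolution `a*b = a(1-b)+(1-a)b`. -/
def bconv (a b : ℝ) : ℝ := a * (1 - b) + (1 - a) * b

/-- The region `𝒞(BS-BC(d₁,d₂))`. -/
def CBSBC (d1 d2 : ℝ) : Set (ℝ × ℝ) :=
  {R | 0 ≤ R.1 ∧ 0 ≤ R.2 ∧ ∃ α ∈ Set.Icc (0:ℝ) (1/2),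
    R.1 ≤ Hb (bconv α d1) - Hb d1 ∧ R.2 ≤ 1 - Hb (bconv α d2)}

/-- The region `𝒞(BE-BC(ε₁,ε₂))`. -/
def CBEBC (e1 e2 : ℝ) : Set (ℝ × ℝ) :=
  {R | 0 ≤ R.1 ∧ 0 ≤ R.2 ∧ ∃ β ∈ Set.Icc (0:ℝ) 1,
    R.1 ≤ β * (1 - e1) ∧ R.2 ≤ (1 - β) * (1 - e2)}

/-- 1-norm distance between two functions on a finite type. -/
def l1dist {α : Type} [Fintype α] (p q : α → ℝ) : ℝ := ∑ a, |p a - q a|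

/-- Capacity `C(p_{Y|X}) = max_{p_X} I(X;Y)` of a point-to-point channel. -/
def Cmarg {X Y : Type} [Fintype X] [Fintype Y] (Wm : X → Y → ℝ) : ℝ :=
  sSup {r | ∃ pX : X → ℝ, IsPMF pX ∧ r = MI (fun a : X × Y => pX a.1 * Wm a.1 a.2)}

section SystemPi

variable {S X Y1 Y2 US1 US2 : Type}
variable [Fintype S] [Fintype Y1] [Fintype Y2] [Fintype US1] [Fintype US2]

/-- Probability of a source block under an i.i.d. source. -/
def srcProd (pS : S → ℝ) (m : ℕ) (s : Fin m → S) : ℝ := ∏ t, pS (s t)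

/-- Joint pmf of `(S(t), Ŝ₁(t))` induced by a code for System Π. -/
def jointPi1 (pS : S → ℝ) (W : X → Y1 × Y2 → ℝ) (m n : ℕ)
    (f : (Fin m → S) → Fin n → X) (g1 : (Fin n → Y1) → Fin m → US1) (t : Fin m) :
    S × US1 → ℝ :=
  fun a => ∑ s : Fin m → S, ∑ y : (Fin n → Y1) × (Fin n → Y2),
    srcProd pS m s * nFold W n (f s) y * (if s t = a.1 ∧ g1 y.1 t = a.2 then 1 else 0)

/-- Joint pmf of `(S(t), Ŝ₂(t))` induced by a code for System Π. -/
def jointPi2 (pS : S → ℝ) (W : X → Y1 × Y2 → ℝ) (m n : ℕ)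
    (f : (Fin m → S) → Fin n → X) (g2 : (Fin n → Y2) → Fin m → US2) (t : Fin m) :
    S × US2 → ℝ :=
  fun a => ∑ s : Fin m → S, ∑ y : (Fin n → Y1) × (Fin n → Y2),
    srcProd pS m s * nFold W n (f s) y * (if s t = a.1 ∧ g2 y.2 t = a.2 then 1 else 0)

/-- Time-averaged joint pmf `(1/m)∑_t p_{S(t),Ŝ₁(t)}`. -/
def avgJoint1 (pS : S → ℝ) (W : X → Y1 × Y2 → ℝ) (m n : ℕ)
    (f : (Fin m → S) → Fin n → X) (g1 : (Fin n → Y1) → Fin m → US1) :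
    S × US1 → ℝ :=
  fun a => (1 / (m : ℝ)) * ∑ t, jointPi1 pS W m n f g1 t a

/-- Time-averaged joint pmf `(1/m)∑_t p_{S(t),Ŝ₂(t)}`. -/
def avgJoint2 (pS : S → ℝ) (W : X → Y1 × Y2 → ℝ) (m n : ℕ)
    (f : (Fin m → S) → Fin n → X) (g2 : (Fin n → Y2) → Fin m → US2) :
    S × US2 → ℝ :=
  fun a => (1 / (m : ℝ)) * ∑ t, jointPi2 pS W m n f g2 t a

/-- `(κ, 𝒬₁, 𝒬₂) ∈ Γ` : achievability for System Π (Definition 1). -/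
def InGamma (pS : S → ℝ) (W : X → Y1 × Y2 → ℝ)
    (Q1 : Set (S × US1 → ℝ)) (Q2 : Set (S × US2 → ℝ)) (κ : ℝ) : Prop :=
  ∀ ε : ℝ, 0 < ε → ∃ (m n : ℕ), 0 < m ∧
    ∃ (f : (Fin m → S) → Fin n → X) (g1 : (Fin n → Y1) → Fin m → US1)
      (g2 : (Fin n → Y2) → Fin m → US2),
      (n : ℝ) / (m : ℝ) ≤ κ + ε ∧
      (∃ q1 ∈ Q1, l1dist (avgJoint1 pS W m n f g1) q1 ≤ ε) ∧
      (∃ q2 ∈ Q2, l1dist (avgJoint2 pS W m n f g2) q2 ≤ ε)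

/-- `(κ, d₁, d₂)` achievable for System Π under distortion measures `w₁, w₂`
(Definition 2). -/
def AchDist (pS : S → ℝ) (W : X → Y1 × Y2 → ℝ)
    (w1 : S × US1 → ℝ) (w2 : S × US2 → ℝ) (κ d1 d2 : ℝ) : Prop :=
  ∀ ε : ℝ, 0 < ε → ∃ (m n : ℕ), 0 < m ∧
    ∃ (f : (Fin m → S) → Fin n → X) (g1 : (Fin n → Y1) → Fin m → US1)
      (g2 : (Fin n → Y2) → Fin m → US2),
      (n : ℝ) / (m : ℝ) ≤ κ + ε ∧
      ∑ a, avgJoint1 pS W m n f g1 a * w1 a ≤ d1 + ε ∧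
      ∑ a, avgJoint2 pS W m n f g2 a * w2 a ≤ d2 + ε

end SystemPi
section AuxProof

lemma sum_prod_pi {n : ℕ} {A : Type} [Fintype A] (h : Fin n → A → ℝ) :
    ∑ s : Fin n → A, ∏ t, h t (s t) = ∏ t, ∑ a, h t a := by
  calc ∑ s : Fin n → A, ∏ t, h t (s t)
      = ∑ s ∈ Fintype.piFinset (fun _ : Fin n => (Finset.univ : Finset A)), ∏ t, h t (s t) := by
        rw [Fintype.piFinset_univ]
    _ = ∏ t, ∑ a, h t a := (Finset.prod_univ_sum _ _).symm

lemma sum_nFold {X Y1 Y2 : Type} [Fintype Y1] [Fintype Y2] {W : X → Y1 × Y2 → ℝ}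
    (hW : IsChannel W) (n : ℕ) (x : Fin n → X) :
    ∑ y : (Fin n → Y1) × (Fin n → Y2), nFold W n x y = 1 := by
  rw [← Equiv.sum_comp (Equiv.arrowProdEquivProdArrow (Fin n) (fun _ => Y1) (fun _ => Y2)) (fun y => nFold W n x y)]
  have h1 : ∀ z : Fin n → Y1 × Y2,
      nFold W n x (Equiv.arrowProdEquivProdArrow (Fin n) (fun _ => Y1) (fun _ => Y2) z) = ∏ t, W (x t) (z t) := by
    intro z
    unfold nFold
    apply Finset.prod_congr rfl
    intro t _
    simp [Equiv.arrowProdEquivProdArrow]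
  rw [Finset.sum_congr rfl fun z _ => h1 z,
    sum_prod_pi (fun t (a : Y1 × Y2) => W (x t) a)]
  exact Finset.prod_eq_one fun t _ => (hW (x t)).2

lemma srcProd_nonneg {S : Type} [Fintype S] {pS : S → ℝ} (h : ∀ s, 0 ≤ pS s)
    (m : ℕ) (s : Fin m → S) : 0 ≤ srcProd pS m s :=
  Finset.prod_nonneg fun t _ => h (s t)

lemma nFold_nonneg {X Y1 Y2 : Type} [Fintype Y1] [Fintype Y2] {W : X → Y1 × Y2 → ℝ}
    (hW : IsChannel W) (n : ℕ) (x : Fin n → X) (y : (Fin n → Y1) × (Fin n → Y2)) :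
    0 ≤ nFold W n x y :=
  Finset.prod_nonneg fun t _ => (hW (x t)).1 _

lemma srcProd_cond {S : Type} [Fintype S] {pS : S → ℝ} (hpS : IsPMF pS)
    (m : ℕ) (t : Fin m) (a : S) :
    ∑ s : Fin m → S, srcProd pS m s * (if s t = a then 1 else 0) = pS a := by
  classical
  have key : ∀ s : Fin m → S,
      srcProd pS m s * (if s t = a then 1 else 0)
        = ∏ t', (fun t' b => if t' = t then (if b = a then pS b else 0) else pS b) t' (s t') := by
    intro s
    by_cases h : s t = a
    · simp only [h, if_true, mul_one]
      unfold srcProd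
      apply Finset.prod_congr rfl
      intro t' _
      by_cases ht : t' = t
      · subst ht; simp [h]
      · simp [ht]
    · simp only [h, if_false, mul_zero]
      symm
      apply Finset.prod_eq_zero (Finset.mem_univ t)
      simp [h]
  rw [Finset.sum_congr rfl fun s _ => key s,
    sum_prod_pi (fun t' b => if t' = t then (if b = a then pS b else 0) else pS b)]
  rw [Finset.prod_eq_single t (fun t' _ ht' => by simp [ht', hpS.2]) (fun h => absurd (Finset.mem_univ t) h)]
  simp

lemma joint_marg {S X Y1 Y2 U : Type} [Fintype S] [Fintype Y1] [Fintype Y2] [Fintype U]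
    {pS : S → ℝ} (hpS : IsPMF pS) {W : X → Y1 × Y2 → ℝ} (hW : IsChannel W)
    (m n : ℕ) (f : (Fin m → S) → Fin n → X) (G : (Fin n → Y1) × (Fin n → Y2) → U)
    (t : Fin m) (a : S) :
    ∑ u, (∑ s : Fin m → S, ∑ y : (Fin n → Y1) × (Fin n → Y2),
      srcProd pS m s * nFold W n (f s) y * (if s t = a ∧ G y = u then 1 else 0)) = pS a := by
  classical
  rw [Finset.sum_comm]
  have h1 : ∀ s : Fin m → S,
      (∑ u : U, ∑ y : (Fin n → Y1) × (Fin n → Y2),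
        srcProd pS m s * nFold W n (f s) y * (if s t = a ∧ G y = u then 1 else 0))
        = srcProd pS m s * (if s t = a then 1 else 0) := by
    intro s
    rw [Finset.sum_comm]
    have h2 : ∀ y : (Fin n → Y1) × (Fin n → Y2),
        (∑ u : U, srcProd pS m s * nFold W n (f s) y * (if s t = a ∧ G y = u then 1 else 0))
          = srcProd pS m s * (if s t = a then 1 else 0) * nFold W n (f s) y := by
      intro y
      rw [← Finset.mul_sum]
      have : (∑ u : U, if s t = a ∧ G y = u then (1:ℝ) else 0) = if s t = a then 1 else 0 := by
        by_cases h : s t = a <;> simp [h]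
      rw [this]; ring
    rw [Finset.sum_congr rfl fun y _ => h2 y, ← Finset.mul_sum, sum_nFold hW, mul_one]
  rw [Finset.sum_congr rfl fun s _ => h1 s]
  exact srcProd_cond hpS m t a

lemma joint_nonneg {S X Y1 Y2 U : Type} [Fintype S] [Fintype Y1] [Fintype Y2] [Fintype U]
    {pS : S → ℝ} (hpS : IsPMF pS) {W : X → Y1 × Y2 → ℝ} (hW : IsChannel W)
    (m n : ℕ) (f : (Fin m → S) → Fin n → X) (G : (Fin n → Y1) × (Fin n → Y2) → U)
    (t : Fin m) (a : S × U) :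
    0 ≤ ∑ s : Fin m → S, ∑ y : (Fin n → Y1) × (Fin n → Y2),
      srcProd pS m s * nFold W n (f s) y * (if s t = a.1 ∧ G y = a.2 then 1 else 0) := by
  refine Finset.sum_nonneg fun s _ => Finset.sum_nonneg fun y _ => ?_
  have : (0:ℝ) ≤ (if s t = a.1 ∧ G y = a.2 then 1 else 0) := by positivity
  exact mul_nonneg (mul_nonneg (srcProd_nonneg hpS.1 m s) (nFold_nonneg hW n (f s) y)) this

section AvgLemmas
variable {S X Y1 Y2 US1 US2 : Type}
variable [Fintype S] [Fintype Y1] [Fintype Y2] [Fintype US1] [Fintype US2]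
variable {pS : S → ℝ} {W : X → Y1 × Y2 → ℝ}

lemma avgJoint1_marg (hpS : IsPMF pS) (hW : IsChannel W) {m n : ℕ} (hm : 0 < m)
    (f : (Fin m → S) → Fin n → X) (g1 : (Fin n → Y1) → Fin m → US1) (a : S) :
    ∑ u, avgJoint1 pS W m n f g1 (a, u) = pS a := by
  unfold avgJoint1
  rw [← Finset.mul_sum, Finset.sum_comm]
  have h1 : ∀ t : Fin m, ∑ u, jointPi1 pS W m n f g1 t (a, u) = pS a := fun t =>
    joint_marg hpS hW m n f (fun y => g1 y.1 t) t a
  rw [Finset.sum_congr rfl fun t _ => h1 t, Finset.sum_const, Finset.card_univ,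
    Fintype.card_fin, nsmul_eq_mul]
  have hm' : (m : ℝ) ≠ 0 := Nat.cast_ne_zero.mpr hm.ne'
  field_simp

lemma avgJoint2_marg (hpS : IsPMF pS) (hW : IsChannel W) {m n : ℕ} (hm : 0 < m)
    (f : (Fin m → S) → Fin n → X) (g2 : (Fin n → Y2) → Fin m → US2) (a : S) :
    ∑ u, avgJoint2 pS W m n f g2 (a, u) = pS a := by
  unfold avgJoint2
  rw [← Finset.mul_sum, Finset.sum_comm]
  have h1 : ∀ t : Fin m, ∑ u, jointPi2 pS W m n f g2 t (a, u) = pS a := fun t =>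
    joint_marg hpS hW m n f (fun y => g2 y.2 t) t a
  rw [Finset.sum_congr rfl fun t _ => h1 t, Finset.sum_const, Finset.card_univ,
    Fintype.card_fin, nsmul_eq_mul]
  have hm' : (m : ℝ) ≠ 0 := Nat.cast_ne_zero.mpr hm.ne'
  field_simp

lemma avgJoint1_nonneg (hpS : IsPMF pS) (hW : IsChannel W) {m n : ℕ}
    (f : (Fin m → S) → Fin n → X) (g1 : (Fin n → Y1) → Fin m → US1) (a : S × US1) :
    0 ≤ avgJoint1 pS W m n f g1 a := by
  unfold avgJoint1
  refine mul_nonneg (by positivity) (Finset.sum_nonneg fun t _ => ?_)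
  exact joint_nonneg hpS hW m n f (fun y => g1 y.1 t) t a

lemma avgJoint2_nonneg (hpS : IsPMF pS) (hW : IsChannel W) {m n : ℕ}
    (f : (Fin m → S) → Fin n → X) (g2 : (Fin n → Y2) → Fin m → US2) (a : S × US2) :
    0 ≤ avgJoint2 pS W m n f g2 a := by
  unfold avgJoint2
  refine mul_nonneg (by positivity) (Finset.sum_nonneg fun t _ => ?_)
  exact joint_nonneg hpS hW m n f (fun y => g2 y.2 t) t a

lemma avgJoint1_pmf (hpS : IsPMF pS) (hW : IsChannel W) {m n : ℕ} (hm : 0 < m)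
    (f : (Fin m → S) → Fin n → X) (g1 : (Fin n → Y1) → Fin m → US1) :
    IsPMF (avgJoint1 pS W m n f g1) := by
  refine ⟨avgJoint1_nonneg hpS hW f g1, ?_⟩
  rw [Fintype.sum_prod_type]
  rw [Finset.sum_congr rfl fun a _ => avgJoint1_marg hpS hW hm f g1 a]
  exact hpS.2

lemma avgJoint2_pmf (hpS : IsPMF pS) (hW : IsChannel W) {m n : ℕ} (hm : 0 < m)
    (f : (Fin m → S) → Fin n → X) (g2 : (Fin n → Y2) → Fin m → US2) :
    IsPMF (avgJoint2 pS W m n f g2) := by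
  refine ⟨avgJoint2_nonneg hpS hW f g2, ?_⟩
  rw [Fintype.sum_prod_type]
  rw [Finset.sum_congr rfl fun a _ => avgJoint2_marg hpS hW hm f g2 a]
  exact hpS.2

end AvgLemmas

lemma sum_w_le {A : Type} [Fintype A] (p q w : A → ℝ) (hw : ∀ a, 0 ≤ w a) :
    ∑ a, p a * w a ≤ ∑ a, q a * w a + l1dist p q * (∑ a, w a) := by
  have hB : ∀ a, w a ≤ ∑ b, w b := fun a =>
    Finset.single_le_sum (fun b _ => hw b) (Finset.mem_univ a)
  have h1 : ∑ a, p a * w a - ∑ a, q a * w a ≤ l1dist p q * ∑ a, w a := by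
    rw [← Finset.sum_sub_distrib, l1dist, Finset.sum_mul]
    refine Finset.sum_le_sum fun a _ => ?_
    rw [← sub_mul]
    calc (p a - q a) * w a ≤ |p a - q a| * w a :=
          mul_le_mul_of_nonneg_right (le_abs_self _) (hw a)
      _ ≤ |p a - q a| * ∑ b, w b := mul_le_mul_of_nonneg_left (hB a) (abs_nonneg _)
  linarith

section Proj
variable {S U : Type} [Fintype S] [Fintype U] [Nonempty U]

noncomputable def ustar (w : S × U → ℝ) (s : S) : U :=
  Classical.choose (Finset.exists_min_image (Finset.univ) (fun u => w (s, u))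
    ⟨Classical.arbitrary U, Finset.mem_univ _⟩)

lemma ustar_min (w : S × U → ℝ) (s : S) (u : U) : w (s, ustar w s) ≤ w (s, u) := by
  have h := Classical.choose_spec (Finset.exists_min_image (Finset.univ) (fun u => w (s, u))
    ⟨Classical.arbitrary U, Finset.mem_univ _⟩)
  exact h.2 u (Finset.mem_univ u)

lemma Dmin_le (pS : S → ℝ) (w : S × U → ℝ) (p : S × U → ℝ)
    (hp0 : ∀ a, 0 ≤ p a) (hmarg : ∀ s, ∑ u, p (s, u) = pS s) :
    ∑ s, pS s * w (s, ustar w s) ≤ ∑ a, p a * w a := by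
  rw [Fintype.sum_prod_type]
  refine Finset.sum_le_sum fun s _ => ?_
  rw [← hmarg s, Finset.sum_mul]
  exact Finset.sum_le_sum fun u _ =>
    mul_le_mul_of_nonneg_left (ustar_min w s u) (hp0 (s, u))

lemma proj_exists (pS : S → ℝ) (hpS : IsPMF pS) (w : S × U → ℝ) (hw : ∀ a, 0 ≤ w a)
    (d : ℝ) (hd : ∑ s, pS s * w (s, ustar w s) ≤ d) (ε : ℝ) (hε : 0 < ε) :
    ∃ δ > 0, ∀ p : S × U → ℝ, IsPMF p → (∀ s, ∑ u, p (s, u) = pS s) →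
      ∑ a, p a * w a ≤ d + δ →
      ∃ q : S × U → ℝ, IsPMF q ∧ (∀ s, ∑ u, q (s, u) = pS s) ∧ ∑ a, q a * w a ≤ d ∧
        l1dist p q ≤ ε := by
  classical
  set wm : S → ℝ := fun s => w (s, ustar w s) with hwm
  have hwle : ∀ a : S × U, wm a.1 ≤ w a := fun a => by
    have := ustar_min w a.1 a.2; simpa using this
  set T : Finset (S × U) := Finset.univ.filter (fun a => wm a.1 < w a) with hT
  set c : ℝ := if h : T.Nonempty then T.inf' h (fun a => w a - wm a.1) else 1 with hc
  have hc0 : 0 < c := by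
    rw [hc]
    split_ifs with h
    · rw [Finset.lt_inf'_iff]
      intro a ha
      rw [hT, Finset.mem_filter] at ha
      linarith [ha.2]
    · norm_num
  have hcle : ∀ a : S × U, wm a.1 < w a → c ≤ w a - wm a.1 := by
    intro a ha
    have hmem : a ∈ T := by rw [hT, Finset.mem_filter]; exact ⟨Finset.mem_univ a, ha⟩
    rw [hc, dif_pos ⟨a, hmem⟩]
    exact Finset.inf'_le _ hmem
  refine ⟨ε * c / 2, by positivity, ?_⟩
  intro p hp hmarg hple
  by_cases hcase : ∑ a, p a * w a ≤ d
  · exact ⟨p, hp, hmarg, hcase, by simp only [l1dist, sub_self, abs_zero, Finset.sum_const_zero]; exact hε.le⟩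
  push_neg at hcase
  set D := ∑ a, p a * w a with hD
  set Dm := ∑ s, pS s * wm s with hDm
  have hDmd : Dm ≤ d := hd
  have hden : 0 < D - Dm := by simp only [hD, hDm]; linarith
  set lam : ℝ := (D - d) / (D - Dm) with hlam
  have hlam0 : 0 ≤ lam := div_nonneg (by linarith) hden.le
  have hlam1 : lam ≤ 1 := by rw [hlam, div_le_one hden]; linarith
  set ms : S → ℝ := fun s => ∑ u, if wm s < w (s, u) then p (s, u) else 0 with hms
  have hms0 : ∀ s, 0 ≤ ms s := fun s =>
    Finset.sum_nonneg fun u _ => by split_ifs; exacts [hp.1 (s, u), le_refl 0]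
  set P : S × U → ℝ := fun a =>
    (if wm a.1 < w a then 0 else p a) + (if a.2 = ustar w a.1 then ms a.1 else 0) with hP
  have hP0 : ∀ a, 0 ≤ P a := by
    intro a
    refine add_nonneg ?_ ?_ <;> split_ifs
    exacts [le_refl 0, hp.1 a, hms0 a.1, le_refl 0]
  have hPmarg : ∀ s, ∑ u, P (s, u) = pS s := by
    intro s
    simp only [hP]
    rw [Finset.sum_add_distrib]
    have h2 : ∑ u, (if u = ustar w s then ms s else 0) = ms s := by
      rw [Finset.sum_ite_eq' Finset.univ (ustar w s) (fun _ => ms s)]; simp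
    have h1 : ∑ u, (if wm s < w (s, u) then (0:ℝ) else p (s, u)) = pS s - ms s := by
      have key : ∀ u, (if wm s < w (s, u) then (0:ℝ) else p (s, u))
          = p (s, u) - (if wm s < w (s, u) then p (s, u) else 0) := fun u => by
        split_ifs <;> ring
      rw [Finset.sum_congr rfl fun u _ => key u, Finset.sum_sub_distrib, hmarg s, hms]
    rw [h1, h2]; ring
  have hust_eq : ∀ s, w (s, ustar w s) = wm s := fun s => rfl
  have hgap_ne : ∀ a : S × U, wm a.1 < w a → a.2 ≠ ustar w a.1 := by
    intro a ha heq
    have : w a = wm a.1 := by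
      have : a = (a.1, a.2) := rfl
      rw [this, heq]
    linarith [ha, this.ge, this.le]
  -- value of ∑ P w
  have hPw : ∑ a, P a * w a = Dm := by
    have key : ∀ a : S × U, P a * w a =
        (p a * wm a.1 - (if wm a.1 < w a then p a * wm a.1 else 0))
          + (if a.2 = ustar w a.1 then ms a.1 * wm a.1 else 0) := by
      intro a
      simp only [hP]
      by_cases hg : wm a.1 < w a
      · have hne : a.2 ≠ ustar w a.1 := hgap_ne a hg
        simp [hg, hne]
      · have heq : w a = wm a.1 := le_antisymm (not_lt.1 hg) (hwle a)
        by_cases hu : a.2 = ustar w a.1 <;> simp [hg, hu, heq] <;> ring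
    rw [Finset.sum_congr rfl fun a _ => key a, Finset.sum_add_distrib,
      Finset.sum_sub_distrib]
    have e1 : ∑ a : S × U, p a * wm a.1 = Dm := by
      rw [hDm, Fintype.sum_prod_type]
      refine Finset.sum_congr rfl fun s _ => ?_
      rw [← hmarg s, Finset.sum_mul]
    have e2 : ∑ a : S × U, (if wm a.1 < w a then p a * wm a.1 else 0)
        = ∑ s, ms s * wm s := by
      rw [Fintype.sum_prod_type]
      refine Finset.sum_congr rfl fun s _ => ?_
      rw [hms, Finset.sum_mul]
      refine Finset.sum_congr rfl fun u _ => ?_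
      split_ifs <;> ring
    have e3 : ∑ a : S × U, (if a.2 = ustar w a.1 then ms a.1 * wm a.1 else 0)
        = ∑ s, ms s * wm s := by
      rw [Fintype.sum_prod_type]
      refine Finset.sum_congr rfl fun s _ => ?_
      rw [Finset.sum_ite_eq' Finset.univ (ustar w s) (fun _ => ms s * wm s)]
      simp
    rw [e1, e2, e3]; ring
  set M : ℝ := ∑ a : S × U, (if wm a.1 < w a then p a else 0) with hM
  have hMms : M = ∑ s, ms s := by
    rw [hM, Fintype.sum_prod_type]
  have hM0 : 0 ≤ M := Finset.sum_nonneg fun a _ => by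
    split_ifs; exacts [hp.1 a, le_refl 0]
  -- gap bound : c * M ≤ D - Dm
  have hgapge : c * M ≤ D - Dm := by
    have e1 : D - Dm = ∑ a : S × U, p a * (w a - wm a.1) := by
      have e0 : Dm = ∑ a : S × U, p a * wm a.1 := by
        rw [hDm, Fintype.sum_prod_type]
        refine Finset.sum_congr rfl fun s _ => ?_
        rw [← hmarg s, Finset.sum_mul]
      rw [hD, e0, ← Finset.sum_sub_distrib]
      exact Finset.sum_congr rfl fun a _ => by ring
    rw [e1, hM, Finset.mul_sum]
    refine Finset.sum_le_sum fun a _ => ?_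
    by_cases hg : wm a.1 < w a
    · rw [if_pos hg]
      calc c * p a ≤ (w a - wm a.1) * p a :=
            mul_le_mul_of_nonneg_right (hcle a hg) (hp.1 a)
        _ = p a * (w a - wm a.1) := by ring
    · rw [if_neg hg, mul_zero]
      exact mul_nonneg (hp.1 a) (by linarith [hwle a])
  -- the projected pmf
  set q : S × U → ℝ := fun a => (1 - lam) * p a + lam * P a with hq
  have hq0 : ∀ a, 0 ≤ q a := fun a =>
    add_nonneg (mul_nonneg (by linarith) (hp.1 a)) (mul_nonneg hlam0 (hP0 a))
  have hqmarg : ∀ s, ∑ u, q (s, u) = pS s := by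
    intro s
    simp only [hq]
    rw [Finset.sum_add_distrib, ← Finset.mul_sum, ← Finset.mul_sum, hmarg s, hPmarg s]
    ring
  have hqsum : ∑ a, q a = 1 := by
    rw [Fintype.sum_prod_type, Finset.sum_congr rfl fun s _ => hqmarg s]
    exact hpS.2
  have hlamD : lam * (D - Dm) = D - d := by
    rw [hlam, div_mul_cancel₀ _ hden.ne']
  have hqw : ∑ a, q a * w a = d := by
    have e1 : ∑ a, q a * w a = (1 - lam) * D + lam * Dm := by
      simp only [hq]
      rw [Finset.sum_congr rfl fun a _ =>
        (by ring : ((1 - lam) * p a + lam * P a) * w a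
          = (1 - lam) * (p a * w a) + lam * (P a * w a)),
        Finset.sum_add_distrib, ← Finset.mul_sum, ← Finset.mul_sum, hPw, ← hD]
    rw [e1]; linarith [hlamD]
  -- l1 distance
  have hdist : l1dist p q = lam * (2 * M) := by
    have key : ∀ a : S × U, |p a - q a| =
        lam * ((if wm a.1 < w a then p a else 0)
          + (if a.2 = ustar w a.1 then ms a.1 else 0)) := by
      intro a
      have hpq : p a - q a = lam * (p a - P a) := by simp only [hq]; ring
      rw [hpq, abs_mul, abs_of_nonneg hlam0]
      congr 1
      simp only [hP]
      by_cases hg : wm a.1 < w a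
      · have hne : a.2 ≠ ustar w a.1 := hgap_ne a hg
        simp [hg, hne, abs_of_nonneg (hp.1 a)]
      · by_cases hu : a.2 = ustar w a.1
        · simp only [hg, if_false, hu, if_true]
          rw [show p a - (p a + ms a.1) = -(ms a.1) by ring, abs_neg,
            abs_of_nonneg (hms0 a.1)]
          exact (zero_add _).symm
        · simp [hg, hu]
    rw [l1dist, Finset.sum_congr rfl fun a _ => key a, ← Finset.mul_sum,
      Finset.sum_add_distrib]
    have e3 : ∑ a : S × U, (if a.2 = ustar w a.1 then ms a.1 else 0) = ∑ s, ms s := by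
      rw [Fintype.sum_prod_type]
      refine Finset.sum_congr rfl fun s _ => ?_
      rw [Finset.sum_ite_eq' Finset.univ (ustar w s) (fun _ => ms s)]
      simp
    rw [e3, ← hM, ← hMms]
    ring
  have hdistle : l1dist p q ≤ ε := by
    have h1 : c * (lam * (2 * M)) ≤ ε * c := by
      have h2 : lam * (2 * (c * M)) ≤ lam * (2 * (D - Dm)) := by
        refine mul_le_mul_of_nonneg_left ?_ hlam0
        linarith
      have h3 : lam * (2 * (D - Dm)) = 2 * (D - d) := by
        rw [show lam * (2 * (D - Dm)) = 2 * (lam * (D - Dm)) by ring, hlamD]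
      have h4 : D - d ≤ ε * c / 2 := by
        simp only [hD] at hple ⊢; linarith
      calc c * (lam * (2 * M)) = lam * (2 * (c * M)) := by ring
        _ ≤ lam * (2 * (D - Dm)) := h2
        _ = 2 * (D - d) := h3
        _ ≤ ε * c := by linarith
    calc l1dist p q = lam * (2 * M) := hdist
      _ ≤ ε := by
        by_contra hcon
        push_neg at hcon
        have : c * ε < c * (lam * (2 * M)) := by
          exact mul_lt_mul_of_pos_left hcon hc0
        linarith
  exact ⟨q, ⟨hq0, hqsum⟩, hqmarg, le_of_eq hqw, hdistle⟩

end Proj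
end AuxProof

/-- **Proposition 1.** `(κ,d₁,d₂)` is achievable for System Π under distortion
measures `w₁` and `w₂` iff `(κ, 𝒬(w₁,d₁), 𝒬(w₂,d₂)) ∈ Γ`. -/
theorem distortion_iff_inGamma
    {S X Y1 Y2 US1 US2 : Type}
    [Fintype S] [Fintype X] [Fintype Y1] [Fintype Y2] [Fintype US1] [Fintype US2]
    [Nonempty X] [Nonempty US1] [Nonempty US2]
    (pS : S → ℝ) (hpS : IsPMF pS)
    (W : X → Y1 × Y2 → ℝ) (hW : IsChannel W)
    (w1 : S × US1 → ℝ) (w2 : S × US2 → ℝ)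
    (hw1 : ∀ a, 0 ≤ w1 a) (hw2 : ∀ a, 0 ≤ w2 a)
    (κ d1 d2 : ℝ) (hκ : 0 ≤ κ) (hd1 : 0 ≤ d1) (hd2 : 0 ≤ d2) :
    AchDist pS W w1 w2 κ d1 d2 ↔
      InGamma pS W
        {q : S × US1 → ℝ | IsPMF q ∧ (∀ s, ∑ u, q (s, u) = pS s) ∧ ∑ a, q a * w1 a ≤ d1}
        {q : S × US2 → ℝ | IsPMF q ∧ (∀ s, ∑ u, q (s, u) = pS s) ∧ ∑ a, q a * w2 a ≤ d2}
        κ := by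
  constructor
  · -- AchDist → InGamma
    intro hach
    have hdm1 : ∑ s, pS s * w1 (s, ustar w1 s) ≤ d1 := by
      refine le_of_forall_pos_le_add ?_
      intro ε' hε'
      obtain ⟨m, n, hm, f, g1, g2, hrate, h1, h2⟩ := hach ε' hε'
      calc ∑ s, pS s * w1 (s, ustar w1 s)
          ≤ ∑ a, avgJoint1 pS W m n f g1 a * w1 a :=
            Dmin_le pS w1 _ (avgJoint1_nonneg hpS hW f g1)
              (avgJoint1_marg hpS hW hm f g1)
        _ ≤ d1 + ε' := h1
    have hdm2 : ∑ s, pS s * w2 (s, ustar w2 s) ≤ d2 := by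
      refine le_of_forall_pos_le_add ?_
      intro ε' hε'
      obtain ⟨m, n, hm, f, g1, g2, hrate, h1, h2⟩ := hach ε' hε'
      calc ∑ s, pS s * w2 (s, ustar w2 s)
          ≤ ∑ a, avgJoint2 pS W m n f g2 a * w2 a :=
            Dmin_le pS w2 _ (avgJoint2_nonneg hpS hW f g2)
              (avgJoint2_marg hpS hW hm f g2)
        _ ≤ d2 + ε' := h2
    intro ε hε
    obtain ⟨δ1, hδ1, hproj1⟩ := proj_exists pS hpS w1 hw1 d1 hdm1 ε hε
    obtain ⟨δ2, hδ2, hproj2⟩ := proj_exists pS hpS w2 hw2 d2 hdm2 ε hε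
    set δ := min ε (min δ1 δ2) with hδdef
    have hδ : 0 < δ := lt_min hε (lt_min hδ1 hδ2)
    obtain ⟨m, n, hm, f, g1, g2, hrate, h1, h2⟩ := hach δ hδ
    refine ⟨m, n, hm, f, g1, g2, ?_, ?_, ?_⟩
    · have := min_le_left ε (min δ1 δ2)
      linarith
    · have hle : ∑ a, avgJoint1 pS W m n f g1 a * w1 a ≤ d1 + δ1 := by
        have : δ ≤ δ1 := le_trans (min_le_right _ _) (min_le_left _ _)
        linarith
      obtain ⟨q1, hq1pmf, hq1marg, hq1w, hq1d⟩ :=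
        hproj1 (avgJoint1 pS W m n f g1) (avgJoint1_pmf hpS hW hm f g1)
          (avgJoint1_marg hpS hW hm f g1) hle
      exact ⟨q1, ⟨hq1pmf, hq1marg, hq1w⟩, hq1d⟩
    · have hle : ∑ a, avgJoint2 pS W m n f g2 a * w2 a ≤ d2 + δ2 := by
        have : δ ≤ δ2 := le_trans (min_le_right _ _) (min_le_right _ _)
        linarith
      obtain ⟨q2, hq2pmf, hq2marg, hq2w, hq2d⟩ :=
        hproj2 (avgJoint2 pS W m n f g2) (avgJoint2_pmf hpS hW hm f g2)
          (avgJoint2_marg hpS hW hm f g2) hle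
      exact ⟨q2, ⟨hq2pmf, hq2marg, hq2w⟩, hq2d⟩
  · -- InGamma → AchDist
    intro hg ε hε
    have hB1 : (0:ℝ) ≤ ∑ a, w1 a := Finset.sum_nonneg fun a _ => hw1 a
    have hB2 : (0:ℝ) ≤ ∑ a, w2 a := Finset.sum_nonneg fun a _ => hw2 a
    set B : ℝ := (∑ a, w1 a) + (∑ a, w2 a) + 1 with hBdef
    have hB : 0 < B := by linarith
    set δ := min ε (ε / B) with hδdef
    have hδ : 0 < δ := lt_min hε (div_pos hε hB)
    obtain ⟨m, n, hm, f, g1, g2, hrate, ⟨q1, hq1mem, hd1'⟩, ⟨q2, hq2mem, hd2'⟩⟩ := hg δ hδ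
    have hδε : δ ≤ ε := min_le_left _ _
    have hδB : δ * B ≤ ε := by
      have h1 : δ ≤ ε / B := min_le_right _ _
      calc δ * B ≤ (ε / B) * B := mul_le_mul_of_nonneg_right h1 hB.le
        _ = ε := div_mul_cancel₀ ε hB.ne'
    refine ⟨m, n, hm, f, g1, g2, by linarith, ?_, ?_⟩
    · have hl1 : l1dist (avgJoint1 pS W m n f g1) q1 * (∑ a, w1 a) ≤ δ * (∑ a, w1 a) :=
        mul_le_mul_of_nonneg_right hd1' hB1
      have hδ1B : δ * (∑ a, w1 a) ≤ ε := by
        have : δ * (∑ a, w1 a) ≤ δ * B := by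
          refine mul_le_mul_of_nonneg_left ?_ hδ.le
          linarith
        linarith
      calc ∑ a, avgJoint1 pS W m n f g1 a * w1 a
          ≤ ∑ a, q1 a * w1 a + l1dist (avgJoint1 pS W m n f g1) q1 * (∑ a, w1 a) :=
            sum_w_le _ _ _ hw1
        _ ≤ d1 + ε := by
            have := hq1mem.2.2
            linarith
    · have hl1 : l1dist (avgJoint2 pS W m n f g2) q2 * (∑ a, w2 a) ≤ δ * (∑ a, w2 a) :=
        mul_le_mul_of_nonneg_right hd2' hB2
      have hδ2B : δ * (∑ a, w2 a) ≤ ε := by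
        have : δ * (∑ a, w2 a) ≤ δ * B := by
          refine mul_le_mul_of_nonneg_left ?_ hδ.le
          linarith
        linarith
      calc ∑ a, avgJoint2 pS W m n f g2 a * w2 a
          ≤ ∑ a, q2 a * w2 a + l1dist (avgJoint2 pS W m n f g2) q2 * (∑ a, w2 a) :=
            sum_w_le _ _ _ hw2
        _ ≤ d2 + ε := by
            have := hq2mem.2.2
            linarith

end
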